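/- Strong duality for worst-case expectation over a Wasserstein ball on a finite space: for a probability distribution ĥ = (1/N)·Σ_{j=1}^N δ_{r̂_j} on {0,...,M} (an empirical distribution of N samples r̂_j), a function t : {0,...,M} → ℝ, and ρ ≥ 0, one has sup_{h : W(h, ĥ) ≤ ρ} E_{r∼h}[t_r] = inf_{λ ≥ 0} { λρ + (1/N)·Σ_{j=1}^N max_{r ∈ {0,...,M}} ( t_r − λ·|r − r̂_j| ) }. -/

import Mathlib

open Finset

/-- `h` is a probability mass function on `{0, …, M}`. -/
def IsProb {M : ℕ} (h : Fin (M + 1) → ℝ) : Prop :=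
  (∀ r, 0 ≤ h r) ∧ ∑ r, h r = 1

/-- `γ` is a coupling of `h₁` and `h₂` on `{0, …, M}²`. -/
def IsCoupling {M : ℕ} (γ : Fin (M + 1) → Fin (M + 1) → ℝ)
    (h₁ h₂ : Fin (M + 1) → ℝ) : Prop :=
  (∀ r₁ r₂, 0 ≤ γ r₁ r₂) ∧
  (∀ r₁, ∑ r₂, γ r₁ r₂ = h₁ r₁) ∧
  (∀ r₂, ∑ r₁, γ r₁ r₂ = h₂ r₂)

/-- The 1-Wasserstein distance on `{0, …, M}` with ground metric `|r - r'|`. -/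
noncomputable def Wdist {M : ℕ} (h₁ h₂ : Fin (M + 1) → ℝ) : ℝ :=
  sInf { c : ℝ | ∃ γ, IsCoupling γ h₁ h₂ ∧
    c = ∑ r₁, ∑ r₂, γ r₁ r₂ * |((r₁ : ℕ) : ℝ) - ((r₂ : ℕ) : ℝ)| }

/-- The empirical distribution of samples `rhat : Fin N → Fin (M+1)`. -/
noncomputable def empDist {M N : ℕ} (rhat : Fin N → Fin (M + 1)) :
    Fin (M + 1) → ℝ :=
  fun r => (∑ j, if rhat j = r then (1 : ℝ) else 0) / N

namespace WDual

variable {M N : ℕ}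

lemma costSet_bddBelow (h₁ h₂ : Fin (M+1) → ℝ) :
    BddBelow { c : ℝ | ∃ γ, IsCoupling γ h₁ h₂ ∧
      c = ∑ r₁, ∑ r₂, γ r₁ r₂ * |((r₁ : ℕ) : ℝ) - ((r₂ : ℕ) : ℝ)| } := by
  refine ⟨0, fun c hc => ?_⟩
  obtain ⟨γ, hγ, rfl⟩ := hc
  exact Finset.sum_nonneg fun r₁ _ => Finset.sum_nonneg fun r₂ _ =>
    mul_nonneg (hγ.1 r₁ r₂) (abs_nonneg _)

lemma wdist_le_cost (h₁ h₂ : Fin (M+1) → ℝ) (γ) (hγ : IsCoupling γ h₁ h₂) :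
    Wdist h₁ h₂ ≤ ∑ r₁, ∑ r₂, γ r₁ r₂ * |((r₁ : ℕ) : ℝ) - ((r₂ : ℕ) : ℝ)| :=
  csInf_le (costSet_bddBelow h₁ h₂) ⟨γ, hγ, rfl⟩

lemma empDist_isProb (hN : 0 < N) (rhat : Fin N → Fin (M + 1)) :
    IsProb (empDist rhat) := by
  have hN' : (0:ℝ) < N := by exact_mod_cast hN
  constructor
  · intro r
    apply div_nonneg _ (Nat.cast_nonneg N)
    exact Finset.sum_nonneg fun j _ => by positivity
  · unfold empDist
    rw [← Finset.sum_div, Finset.sum_comm]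
    simp only [Finset.sum_ite_eq, Finset.mem_univ, if_true]
    rw [Finset.sum_const, card_univ, Fintype.card_fin]
    field_simp
    simp

lemma sum_empDist_mul (rhat : Fin N → Fin (M+1)) (F : Fin (M+1) → ℝ) :
    ∑ r, empDist rhat r * F r = (1/(N:ℝ)) * ∑ j, F (rhat j) := by
  have h1 : ∀ r : Fin (M+1), empDist rhat r * F r
      = ∑ j, (if rhat j = r then (1:ℝ) else 0) * F r / N := by
    intro r
    rw [empDist, div_mul_eq_mul_div, Finset.sum_mul, Finset.sum_div]
  simp only [h1]
  rw [Finset.sum_comm, Finset.mul_sum]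
  refine Finset.sum_congr rfl fun j _ => ?_
  rw [Finset.sum_eq_single (rhat j)]
  · simp [mul_comm]; ring
  · intro r _ hr; simp [Ne.symm hr]
  · simp

lemma prod_coupling (h₁ h₂ : Fin (M+1) → ℝ) (H₁ : IsProb h₁) (H₂ : IsProb h₂) :
    IsCoupling (fun r₁ r₂ => h₁ r₁ * h₂ r₂) h₁ h₂ := by
  refine ⟨fun r₁ r₂ => mul_nonneg (H₁.1 r₁) (H₂.1 r₂), fun r₁ => ?_, fun r₂ => ?_⟩
  · rw [← Finset.mul_sum, H₂.2, mul_one]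
  · rw [← Finset.sum_mul, H₁.2, one_mul]

lemma wdist_self_nonpos (hN : 0 < N) (rhat : Fin N → Fin (M+1)) :
    Wdist (empDist rhat) (empDist rhat) ≤ 0 := by
  have hcoup : IsCoupling (fun r₁ r₂ => if r₁ = r₂ then empDist rhat r₁ else 0)
      (empDist rhat) (empDist rhat) := by
    refine ⟨fun r₁ r₂ => ?_, fun r₁ => ?_, fun r₂ => ?_⟩
    · simp only
      split
      · exact (empDist_isProb hN rhat).1 r₁
      · exact le_refl 0
    · simp
    · simp only [Finset.sum_ite_eq', Finset.mem_univ, if_true]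
  have h := wdist_le_cost _ _ _ hcoup
  calc Wdist (empDist rhat) (empDist rhat) ≤ _ := h
    _ = 0 := by
      refine Finset.sum_eq_zero fun r₁ _ => Finset.sum_eq_zero fun r₂ _ => ?_
      by_cases h12 : r₁ = r₂
      · subst h12; simp
      · simp [h12]


lemma weak_coupling (rhat : Fin N → Fin (M+1)) (t : Fin (M+1) → ℝ)
    (l : ℝ) (hl : 0 ≤ l) (h : Fin (M+1) → ℝ)
    (γ : Fin (M+1) → Fin (M+1) → ℝ) (hγ : IsCoupling γ h (empDist rhat)) :
    ∑ r, h r * t r ≤ l * (∑ r₁, ∑ r₂, γ r₁ r₂ * |((r₁:ℕ):ℝ) - ((r₂:ℕ):ℝ)|)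
      + (1/(N:ℝ)) * ∑ j, (Finset.univ.sup' Finset.univ_nonempty
          (fun r : Fin (M + 1) =>
            t r - l * |((r : ℕ) : ℝ) - ((rhat j : ℕ) : ℝ)|)) := by
  set F : Fin (M+1) → ℝ := fun r₂ => Finset.univ.sup' Finset.univ_nonempty
      (fun r : Fin (M+1) => t r - l * |((r:ℕ):ℝ) - ((r₂:ℕ):ℝ)|) with hF
  have key : ∀ r₁ r₂ : Fin (M+1), γ r₁ r₂ * t r₁ ≤
      γ r₁ r₂ * (l * |((r₁:ℕ):ℝ) - ((r₂:ℕ):ℝ)|) + γ r₁ r₂ * F r₂ := by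
    intro r₁ r₂
    have h1 : t r₁ - l * |((r₁:ℕ):ℝ) - ((r₂:ℕ):ℝ)| ≤ F r₂ :=
      Finset.le_sup' (fun r : Fin (M+1) => t r - l * |((r:ℕ):ℝ) - ((r₂:ℕ):ℝ)|)
        (Finset.mem_univ r₁)
    have h2 := mul_le_mul_of_nonneg_left h1 (hγ.1 r₁ r₂)
    rw [mul_sub] at h2
    linarith
  have c1 : ∑ r, h r * t r = ∑ r₁, ∑ r₂, γ r₁ r₂ * t r₁ := by
    refine Finset.sum_congr rfl fun r _ => ?_
    rw [← hγ.2.1 r, Finset.sum_mul]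
  have c2 : ∑ r₁, ∑ r₂, γ r₁ r₂ * t r₁ ≤
      ∑ r₁, ∑ r₂, (γ r₁ r₂ * (l * |((r₁:ℕ):ℝ) - ((r₂:ℕ):ℝ)|) + γ r₁ r₂ * F r₂) :=
    Finset.sum_le_sum fun r₁ _ => Finset.sum_le_sum fun r₂ _ => key r₁ r₂
  have c3 : ∑ r₁, ∑ r₂, (γ r₁ r₂ * (l * |((r₁:ℕ):ℝ) - ((r₂:ℕ):ℝ)|) + γ r₁ r₂ * F r₂)
      = l * (∑ r₁, ∑ r₂, γ r₁ r₂ * |((r₁:ℕ):ℝ) - ((r₂:ℕ):ℝ)|)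
        + ∑ r₂, empDist rhat r₂ * F r₂ := by
    simp only [Finset.sum_add_distrib]
    congr 1
    · rw [Finset.mul_sum]
      refine Finset.sum_congr rfl fun r₁ _ => ?_
      rw [Finset.mul_sum]
      exact Finset.sum_congr rfl fun r₂ _ => by ring
    · rw [Finset.sum_comm]
      refine Finset.sum_congr rfl fun r₂ _ => ?_
      rw [← Finset.sum_mul, hγ.2.2 r₂]
  rw [c1, sum_empDist_mul rhat F] at *
  calc ∑ r₁, ∑ r₂, γ r₁ r₂ * t r₁ ≤ _ := c2
    _ = _ := c3

lemma weak (hN : 0 < N) (rhat : Fin N → Fin (M+1)) (t : Fin (M+1) → ℝ)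
    (ρ : ℝ) (hρ : 0 ≤ ρ) (l : ℝ) (hl : 0 ≤ l) (h : Fin (M+1) → ℝ)
    (hh : IsProb h) (hW : Wdist h (empDist rhat) ≤ ρ) :
    ∑ r, h r * t r ≤ l * ρ + (1/(N:ℝ)) * ∑ j, (Finset.univ.sup' Finset.univ_nonempty
          (fun r : Fin (M + 1) =>
            t r - l * |((r : ℕ) : ℝ) - ((rhat j : ℕ) : ℝ)|)) := by
  refine le_of_forall_pos_le_add fun δ hδ => ?_
  have hε : 0 < δ / (l+1) := by positivity
  have hne : Set.Nonempty { c : ℝ | ∃ γ, IsCoupling γ h (empDist rhat) ∧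
      c = ∑ r₁, ∑ r₂, γ r₁ r₂ * |((r₁ : ℕ) : ℝ) - ((r₂ : ℕ) : ℝ)| } :=
    ⟨_, ⟨_, prod_coupling h (empDist rhat) hh (empDist_isProb hN rhat), rfl⟩⟩
  have hlt : Wdist h (empDist rhat) < ρ + δ/(l+1) := lt_of_le_of_lt hW (by linarith)
  rw [Wdist] at hlt
  obtain ⟨c, hcmem, hclt⟩ := exists_lt_of_csInf_lt hne hlt
  obtain ⟨γ, hγ, rfl⟩ := hcmem
  have h1 := weak_coupling rhat t l hl h γ hγ
  have h2 : l * (∑ r₁, ∑ r₂, γ r₁ r₂ * |((r₁:ℕ):ℝ) - ((r₂:ℕ):ℝ)|) ≤ l * (ρ + δ/(l+1)) :=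
    mul_le_mul_of_nonneg_left hclt.le hl
  have h3 : l * (δ/(l+1)) ≤ δ := by
    rw [mul_div_assoc'] 
    rw [div_le_iff₀ (by linarith : (0:ℝ) < l+1)]
    nlinarith
  nlinarith

noncomputable def Lmap (rhat : Fin N → Fin (M+1)) (t : Fin (M+1) → ℝ) :
    (Fin N → Fin (M+1) → ℝ) → ℝ × ℝ :=
  fun q => ((1/(N:ℝ)) * ∑ j, ∑ r, q j r * |((r:ℕ):ℝ) - ((rhat j:ℕ):ℝ)|,
            (1/(N:ℝ)) * ∑ j, ∑ r, q j r * t r)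

noncomputable def Pset (rhat : Fin N → Fin (M+1)) (t : Fin (M+1) → ℝ) : Set (ℝ×ℝ) :=
  Lmap rhat t '' Set.univ.pi (fun _ : Fin N => stdSimplex ℝ (Fin (M+1)))

lemma lmap_linear (rhat : Fin N → Fin (M+1)) (t : Fin (M+1) → ℝ) :
    IsLinearMap ℝ (Lmap rhat t) := by
  constructor
  · intro q q'
    unfold Lmap
    refine Prod.ext ?_ ?_ <;>
      simp [Pi.add_apply, add_mul, Finset.sum_add_distrib, mul_add]
  · intro c q
    unfold Lmap
    refine Prod.ext ?_ ?_ <;>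
      simp [Pi.smul_apply, smul_eq_mul, Finset.mul_sum, mul_assoc] <;>
      exact Finset.sum_congr rfl fun j _ => Finset.sum_congr rfl fun r _ => by ring

lemma pset_convex (rhat : Fin N → Fin (M+1)) (t : Fin (M+1) → ℝ) :
    Convex ℝ (Pset rhat t) :=
  (convex_pi fun _ _ => convex_stdSimplex ℝ _).is_linear_image (lmap_linear rhat t)

lemma pset_compact (rhat : Fin N → Fin (M+1)) (t : Fin (M+1) → ℝ) :
    IsCompact (Pset rhat t) := by
  have hc : IsCompact (Set.univ.pi (fun _ : Fin N => stdSimplex ℝ (Fin (M+1)))) :=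
    isCompact_univ_pi fun _ => isCompact_stdSimplex ℝ _
  exact hc.image (LinearMap.continuous_of_finiteDimensional
    (IsLinearMap.mk' _ (lmap_linear rhat t)))

lemma delta_mem_simplex (r₀ : Fin (M+1)) :
    (fun r => if r = r₀ then (1:ℝ) else 0) ∈ stdSimplex ℝ (Fin (M+1)) := by
  constructor
  · intro r; dsimp only; split <;> norm_num
  · simp

lemma delta_sum (r₀ : Fin (M+1)) (F : Fin (M+1) → ℝ) :
    ∑ r, (if r = r₀ then (1:ℝ) else 0) * F r = F r₀ := by
  rw [Finset.sum_eq_single r₀]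
  · simp
  · intro r _ hr; simp [hr]
  · simp

lemma base_mem (rhat : Fin N → Fin (M+1)) (t : Fin (M+1) → ℝ) :
    ((0:ℝ), (1/(N:ℝ)) * ∑ j, t (rhat j)) ∈ Pset rhat t := by
  refine ⟨fun j r => if r = rhat j then (1:ℝ) else 0,
    fun j _ => delta_mem_simplex (rhat j), ?_⟩
  unfold Lmap
  refine Prod.ext ?_ ?_
  · simp only
    have h0 : ∀ j : Fin N, (∑ r, (if r = rhat j then (1:ℝ) else 0) *
        |((r:ℕ):ℝ) - ((rhat j:ℕ):ℝ)|) = 0 := fun j => by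
      rw [delta_sum (rhat j)]; simp
    simp only [h0, Finset.sum_const_zero, mul_zero]
  · simp only
    congr 1
    exact Finset.sum_congr rfl fun j _ => delta_sum (rhat j) t

lemma dual_term_mem (rhat : Fin N → Fin (M+1)) (t : Fin (M+1) → ℝ) (l : ℝ) :
    ∃ p ∈ Pset rhat t, p.2 - l * p.1 =
      (1/(N:ℝ)) * ∑ j, (Finset.univ.sup' Finset.univ_nonempty
        (fun r : Fin (M + 1) =>
          t r - l * |((r : ℕ) : ℝ) - ((rhat j : ℕ) : ℝ)|)) := by
  have hch : ∀ j : Fin N, ∃ b ∈ Finset.univ, (Finset.univ.sup' Finset.univ_nonempty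
      (fun r : Fin (M + 1) => t r - l * |((r : ℕ) : ℝ) - ((rhat j : ℕ) : ℝ)|))
      = t b - l * |((b : ℕ) : ℝ) - ((rhat j : ℕ) : ℝ)| := fun j =>
    Finset.exists_mem_eq_sup' Finset.univ_nonempty _
  choose rs _ hrs using hch
  refine ⟨Lmap rhat t (fun j r => if r = rs j then (1:ℝ) else 0),
    ⟨_, fun j _ => delta_mem_simplex (rs j), rfl⟩, ?_⟩
  unfold Lmap
  simp only
  rw [← mul_assoc, mul_comm l (1/(N:ℝ)), mul_assoc, ← mul_sub]
  congr 1
  rw [Finset.mul_sum, ← Finset.sum_sub_distrib]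
  refine Finset.sum_congr rfl fun j _ => ?_
  rw [delta_sum (rs j), delta_sum (rs j), hrs j]

lemma slice_primal (hN : 0 < N) (rhat : Fin N → Fin (M+1)) (t : Fin (M+1) → ℝ)
    (ρ : ℝ) (p : ℝ × ℝ) (hp : p ∈ Pset rhat t) (hc : p.1 ≤ ρ) :
    ∃ h, IsProb h ∧ Wdist h (empDist rhat) ≤ ρ ∧ p.2 = ∑ r, h r * t r := by
  have hN' : (0:ℝ) < N := by exact_mod_cast hN
  obtain ⟨q, hq, rfl⟩ := hp
  have hq' : ∀ j : Fin N, q j ∈ stdSimplex ℝ (Fin (M+1)) := fun j => hq j (Set.mem_univ j)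
  have hqsum : ∀ j : Fin N, ∑ r, q j r = 1 := fun j => (hq' j).2
  have hqnn : ∀ (j : Fin N) (r : Fin (M+1)), 0 ≤ q j r := fun j => (hq' j).1
  refine ⟨fun r => (1/(N:ℝ)) * ∑ j, q j r,
    ⟨fun r => mul_nonneg (by positivity) (Finset.sum_nonneg fun j _ => hqnn j r), ?_⟩,
    ?_, ?_⟩
  · simp only
    rw [← Finset.mul_sum, Finset.sum_comm]
    simp only [hqsum]
    rw [Finset.sum_const, card_univ, Fintype.card_fin, nsmul_eq_mul, mul_one]
    field_simp
  · have hcoup : IsCoupling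
        (fun r₁ r₂ => (1/(N:ℝ)) * ∑ j, (if rhat j = r₂ then q j r₁ else 0))
        (fun r => (1/(N:ℝ)) * ∑ j, q j r) (empDist rhat) := by
      refine ⟨fun r₁ r₂ => ?_, fun r₁ => ?_, fun r₂ => ?_⟩
      · dsimp only
        refine mul_nonneg (by positivity) (Finset.sum_nonneg fun j _ => ?_)
        split
        · exact hqnn j r₁
        · exact le_refl 0
      · dsimp only
        rw [← Finset.mul_sum]
        congr 1
        rw [Finset.sum_comm]
        refine Finset.sum_congr rfl fun j _ => ?_
        simp
      · dsimp only
        rw [← Finset.mul_sum]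
        have hemp : empDist rhat r₂ = (1/(N:ℝ)) * ∑ j, (if rhat j = r₂ then (1:ℝ) else 0) := by
          rw [empDist]; ring
        rw [hemp, Finset.sum_comm]
        congr 1
        refine Finset.sum_congr rfl fun j _ => ?_
        by_cases hjr : rhat j = r₂
        · simp [hjr, hqsum j]
        · simp [hjr]
    have hle := wdist_le_cost _ _ _ hcoup
    have hcost : (∑ r₁, ∑ r₂,
        ((1/(N:ℝ)) * ∑ j, (if rhat j = r₂ then q j r₁ else 0)) * |((r₁:ℕ):ℝ) - ((r₂:ℕ):ℝ)|)
        = (Lmap rhat t q).1 := by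
      have inner : ∀ r₁ : Fin (M+1), (∑ r₂,
          ((1/(N:ℝ)) * ∑ j, (if rhat j = r₂ then q j r₁ else 0)) * |((r₁:ℕ):ℝ) - ((r₂:ℕ):ℝ)|)
          = ∑ j, (1/(N:ℝ)) * (q j r₁ * |((r₁:ℕ):ℝ) - ((rhat j:ℕ):ℝ)|) := by
        intro r₁
        have e1 : ∀ r₂ : Fin (M+1),
            ((1/(N:ℝ)) * ∑ j, (if rhat j = r₂ then q j r₁ else 0)) * |((r₁:ℕ):ℝ) - ((r₂:ℕ):ℝ)|
            = ∑ j, (1/(N:ℝ)) * ((if rhat j = r₂ then q j r₁ else 0) * |((r₁:ℕ):ℝ) - ((r₂:ℕ):ℝ)|) := by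
          intro r₂
          rw [mul_assoc, Finset.sum_mul, Finset.mul_sum]
        simp only [e1]
        rw [Finset.sum_comm]
        refine Finset.sum_congr rfl fun j _ => ?_
        rw [← Finset.mul_sum]
        congr 1
        rw [Finset.sum_eq_single (rhat j)]
        · simp
        · intro r₂ _ hr; simp [Ne.symm hr]
        · simp
      simp only [inner]
      unfold Lmap
      simp only
      rw [Finset.mul_sum]
      rw [Finset.sum_comm]
      exact Finset.sum_congr rfl fun j _ => (Finset.mul_sum _ _ _).symm
    rw [hcost] at hle
    exact hle.trans hc
  · unfold Lmap
    simp only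
    have e2 : ∀ r : Fin (M+1), ((1/(N:ℝ)) * ∑ j, q j r) * t r
        = ∑ j, (1/(N:ℝ)) * (q j r * t r) := by
      intro r
      rw [mul_assoc, Finset.sum_mul, Finset.mul_sum]
    simp only [e2]
    rw [Finset.mul_sum]
    rw [Finset.sum_comm]
    refine Finset.sum_congr rfl fun j _ => Finset.mul_sum _ _ _

lemma separation (P : Set (ℝ×ℝ)) (hPc : Convex ℝ P) (hPk : IsCompact P)
    (v₀ : ℝ) (hv₀ : ((0:ℝ), v₀) ∈ P) (ρ : ℝ) (hρ : 0 ≤ ρ) (V ε : ℝ) (hε : 0 < ε)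
    (hV : ∀ p ∈ P, p.1 ≤ ρ → p.2 ≤ V) :
    ∃ l : ℝ, 0 ≤ l ∧ ∀ p ∈ P, l * ρ + (p.2 - l * p.1) < V + ε := by
  set Q : Set (ℝ×ℝ) := {p | p.1 ≤ ρ ∧ V + ε ≤ p.2} with hQ
  have hQconv : Convex ℝ Q := by
    intro x hx y hy a b ha hb hab
    obtain ⟨hx1, hx2⟩ := hx
    obtain ⟨hy1, hy2⟩ := hy
    constructor
    · show a * x.1 + b * y.1 ≤ ρ
      nlinarith
    · show V + ε ≤ a * x.2 + b * y.2
      calc V + ε = a*(V+ε) + b*(V+ε) := by rw [← add_mul, hab, one_mul]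
        _ ≤ a * x.2 + b * y.2 :=
          add_le_add (mul_le_mul_of_nonneg_left hx2 ha) (mul_le_mul_of_nonneg_left hy2 hb)
  have hQclosed : IsClosed Q :=
    (isClosed_le continuous_fst continuous_const).inter
      (isClosed_le continuous_const continuous_snd)
  have hdisj : Disjoint P Q := by
    rw [Set.disjoint_left]
    intro p hp hq
    have h1 := hV p hp hq.1
    have h2 := hq.2
    linarith
  obtain ⟨f, u, w, hPu, huw, hQw⟩ :=
    geometric_hahn_banach_compact_closed hPc hPk hQconv hQclosed hdisj
  set a := f (1, 0) with hadef
  set b := f (0, 1) with hbdef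
  have hf : ∀ p : ℝ×ℝ, f p = p.1 * a + p.2 * b := by
    intro p
    have hp : (p : ℝ×ℝ) = p.1 • ((1:ℝ),(0:ℝ)) + p.2 • ((0:ℝ),(1:ℝ)) := by
      ext <;> simp
    conv_lhs => rw [hp]
    rw [map_add, map_smul, map_smul, smul_eq_mul, smul_eq_mul]
  have hb0 : 0 ≤ b := by
    by_contra hb
    push_neg at hb
    set n := max 0 ((w - ρ*a - (V+ε)*b)/b) with hndef
    have hn : 0 ≤ n := le_max_left _ _
    have hmem : ((ρ, V+ε+n) : ℝ×ℝ) ∈ Q := ⟨le_refl _, by simp; linarith⟩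
    have h2 := hQw _ hmem
    rw [hf] at h2
    simp only at h2
    have hn2 : (w - ρ*a - (V+ε)*b)/b ≤ n := le_max_right _ _
    rw [div_le_iff_of_neg hb] at hn2
    nlinarith
  have ha0 : a ≤ 0 := by
    by_contra ha
    push_neg at ha
    set n := max 0 ((ρ*a + (V+ε)*b - w)/a) with hndef
    have hn : 0 ≤ n := le_max_left _ _
    have hmem : ((ρ - n, V+ε) : ℝ×ℝ) ∈ Q := ⟨by simp; linarith, le_refl _⟩
    have h2 := hQw _ hmem
    rw [hf] at h2
    simp only at h2
    have hn2 : (ρ*a + (V+ε)*b - w)/a ≤ n := le_max_right _ _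
    rw [div_le_iff₀ ha] at hn2
    nlinarith
  have hbpos : 0 < b := by
    rcases lt_or_eq_of_le hb0 with h | h
    · exact h
    · exfalso
      have h1 := hPu _ hv₀
      rw [hf] at h1
      simp only at h1
      have h2 := hQw ((ρ, V+ε) : ℝ×ℝ) ⟨le_refl _, le_refl _⟩
      rw [hf] at h2
      simp only at h2
      rw [← h] at h1 h2
      have : ρ * a ≤ 0 := mul_nonpos_of_nonneg_of_nonpos hρ ha0
      nlinarith
  refine ⟨-a/b, div_nonneg (by linarith) hbpos.le, ?_⟩
  intro p hp
  have h1 := hPu p hp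
  rw [hf] at h1
  have h2 := hQw ((ρ, V+ε) : ℝ×ℝ) ⟨le_refl _, le_refl _⟩
  rw [hf] at h2
  simp only at h2
  have e1 : (-a/b) * b = -a := by field_simp
  rw [← mul_lt_mul_iff_of_pos_right hbpos]
  have e2 : ((-a/b) * ρ + (p.2 - (-a/b) * p.1)) * b
      = ((-a/b) * b) * ρ + p.2 * b - ((-a/b) * b) * p.1 := by ring
  rw [e2, e1]
  nlinarith

end WDual

/-- Strong duality for the worst-case expectation over a Wasserstein ball
centered at an empirical distribution on a finite space. -/
theorem wasserstein_sup_duality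
    {M N : ℕ} (hN : 0 < N) (rhat : Fin N → Fin (M + 1))
    (t : Fin (M + 1) → ℝ) (ρ : ℝ) (hρ : 0 ≤ ρ) :
    sSup { x : ℝ | ∃ h, IsProb h ∧ Wdist h (empDist rhat) ≤ ρ ∧
        x = ∑ r, h r * t r } =
      sInf { y : ℝ | ∃ l : ℝ, 0 ≤ l ∧
        y = l * ρ + (1 / N) * ∑ j, (Finset.univ.sup' Finset.univ_nonempty
          (fun r : Fin (M + 1) =>
            t r - l * |((r : ℕ) : ℝ) - ((rhat j : ℕ) : ℝ)|)) } := by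
  have hprob := WDual.empDist_isProb hN rhat
  set S := { x : ℝ | ∃ h, IsProb h ∧ Wdist h (empDist rhat) ≤ ρ ∧
      x = ∑ r, h r * t r } with hSdef
  set D := { y : ℝ | ∃ l : ℝ, 0 ≤ l ∧
      y = l * ρ + (1 / N) * ∑ j, (Finset.univ.sup' Finset.univ_nonempty
        (fun r : Fin (M + 1) =>
          t r - l * |((r : ℕ) : ℝ) - ((rhat j : ℕ) : ℝ)|)) } with hDdef
  have hfeas0 : Wdist (empDist rhat) (empDist rhat) ≤ ρ :=
    (WDual.wdist_self_nonpos hN rhat).trans hρ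
  have x0mem : (∑ r, empDist rhat r * t r) ∈ S := ⟨empDist rhat, hprob, hfeas0, rfl⟩
  have y0mem : ((0:ℝ) * ρ + (1 / N) * ∑ j, (Finset.univ.sup' Finset.univ_nonempty
      (fun r : Fin (M + 1) =>
        t r - 0 * |((r : ℕ) : ℝ) - ((rhat j : ℕ) : ℝ)|))) ∈ D := ⟨0, le_refl 0, rfl⟩
  have weakD : ∀ x ∈ S, ∀ y ∈ D, x ≤ y := by
    intro x hx y hy
    obtain ⟨h, hh, hW, rfl⟩ := hx
    obtain ⟨l, hl, rfl⟩ := hy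
    exact WDual.weak hN rhat t ρ hρ l hl h hh hW
  have Sbdd : BddAbove S := ⟨_, fun x hx => weakD x hx _ y0mem⟩
  have Dbdd : BddBelow D := ⟨_, fun y hy => weakD _ x0mem y hy⟩
  apply le_antisymm
  · exact csSup_le ⟨_, x0mem⟩ fun x hx => le_csInf ⟨_, y0mem⟩ fun y hy => weakD x hx y hy
  · refine le_of_forall_pos_le_add fun ε hε => ?_
    have hV : ∀ p ∈ WDual.Pset rhat t, p.1 ≤ ρ → p.2 ≤ sSup S := by
      intro p hp hc
      obtain ⟨h, hh, hW, hval⟩ := WDual.slice_primal hN rhat t ρ p hp hc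
      rw [hval]
      exact le_csSup Sbdd ⟨h, hh, hW, rfl⟩
    obtain ⟨l, hl, hsep⟩ := WDual.separation (WDual.Pset rhat t)
      (WDual.pset_convex rhat t) (WDual.pset_compact rhat t) _
      (WDual.base_mem rhat t) ρ hρ (sSup S) ε hε hV
    obtain ⟨p, hp, hpe⟩ := WDual.dual_term_mem rhat t l
    have hmem : (l * ρ + (1 / N) * ∑ j, (Finset.univ.sup' Finset.univ_nonempty
        (fun r : Fin (M + 1) =>
          t r - l * |((r : ℕ) : ℝ) - ((rhat j : ℕ) : ℝ)|))) ∈ D := ⟨l, hl, rfl⟩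
    have h1 := csInf_le Dbdd hmem
    have h2 := hsep p hp
    rw [← hpe] at h1
    linarith
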